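/- The one-particle representation of the temporal Coleman-Mandula operator, (X_0 φ)(p) = -(i/m²) ω_p (3/2 + p^k ∂/∂p^k) φ(p), is symmetric (hermitian) on Schwartz functions with respect to the Lorentz-invariant inner product ⟨ψ, φ⟩ = ∫ (d³p / (2ω_p)) conj(ψ(p)) φ(p), where ω_p = √(|p|² + m²) and m > 0. -/

import Mathlib

noncomputable section
open Complex MeasureTheory BigOperators

/-- Relativistic energy `ω_p = √(|p|² + m²)`. -/
def ω (m : ℝ) (p : EuclideanSpace ℝ (Fin 3)) : ℝ := Real.sqrt (‖p‖ ^ 2 + m ^ 2)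

/-- Partial derivative `∂φ/∂p^k` of a function on momentum space. -/
def pd (φ : EuclideanSpace ℝ (Fin 3) → ℂ) (k : Fin 3) (p : EuclideanSpace ℝ (Fin 3)) : ℂ :=
  fderiv ℝ φ p (EuclideanSpace.single k 1)

/-- One-particle representation of the temporal Coleman–Mandula operator:
`(X₀ φ)(p) = -(i/m²) ω_p ((3/2) φ(p) + p^k ∂φ/∂p^k)`. -/
def X0act (m : ℝ) (φ : EuclideanSpace ℝ (Fin 3) → ℂ) (p : EuclideanSpace ℝ (Fin 3)) : ℂ :=
  (-(I / (m ^ 2 : ℂ))) * ((ω m p : ℝ) : ℂ) *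
    (((3 : ℂ) / 2) * φ p + ∑ k, ((p k : ℝ) : ℂ) * pd φ k p)

/-- One-particle representation of the spatial Coleman–Mandula operator:
`(X_j φ)(p) = i (3 p_j/(2m²) φ(p) + (p_j/m²) p^k ∂_k φ(p) - ∂_j φ(p))`. -/
def Xjact (m : ℝ) (j : Fin 3) (φ : EuclideanSpace ℝ (Fin 3) → ℂ)
    (p : EuclideanSpace ℝ (Fin 3)) : ℂ :=
  I * (((3 : ℂ) * ((p j : ℝ) : ℂ) / (2 * (m ^ 2 : ℂ))) * φ p
       + (((p j : ℝ) : ℂ) / (m ^ 2 : ℂ)) * ∑ k, ((p k : ℝ) : ℂ) * pd φ k p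
       - pd φ j p)

/-- Lorentz-invariant inner product `⟨ψ, φ⟩ = ∫ d³p/(2ω_p) conj(ψ(p)) φ(p)`. -/
def lorInner (m : ℝ) (ψ φ : EuclideanSpace ℝ (Fin 3) → ℂ) : ℂ :=
  ∫ p, (starRingEnd ℂ) (ψ p) * φ p / (((2 * ω m p : ℝ)) : ℂ)


abbrev E3 := EuclideanSpace ℝ (Fin 3)

lemma schwartz_tg (f : SchwartzMap E3 ℂ) : Function.HasTemperateGrowth ⇑f := by
  refine ⟨f.smooth', fun n => ?_⟩
  obtain ⟨C, hC⟩ := f.decay' 0 n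
  exact ⟨0, C, fun x => by simpa using (show ‖x‖ ^ 0 * ‖iteratedFDeriv ℝ n (⇑f) x‖ ≤ C from hC x)⟩

def conjS (f : SchwartzMap E3 ℂ) : SchwartzMap E3 ℂ where
  toFun := fun p => star (f p)
  smooth' := (Complex.conjCLE : ℂ ≃L[ℝ] ℂ).contDiff.comp f.smooth'
  decay' := by
    intro k n
    obtain ⟨C, hC⟩ := f.decay' k n
    refine ⟨C, fun x => ?_⟩
    have : (fun p => star (f p)) = ⇑Complex.conjLIE ∘ ⇑f := rfl
    rw [this, Complex.conjLIE.norm_iteratedFDeriv_comp_left]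
    exact hC x

lemma conjS_apply (f : SchwartzMap E3 ℂ) (p : E3) : conjS f p = (starRingEnd ℂ) (f p) := rfl

def Mk (k : Fin 3) : SchwartzMap E3 ℂ →L[ℝ] SchwartzMap E3 ℂ :=
  SchwartzMap.bilinLeftCLM ((ContinuousLinearMap.lsmul ℝ ℝ : ℝ →L[ℝ] ℂ →L[ℝ] ℂ).flip)
    (EuclideanSpace.proj (𝕜 := ℝ) k).hasTemperateGrowth

lemma Mk_apply (k : Fin 3) (f : SchwartzMap E3 ℂ) (p : E3) :
    Mk k f p = ((p k : ℝ) : ℂ) * f p := by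
  show (p k : ℝ) • f p = _
  rw [Complex.real_smul]

def Dk (k : Fin 3) : SchwartzMap E3 ℂ →L[ℝ] SchwartzMap E3 ℂ :=
  LineDeriv.lineDerivOpCLM ℝ (SchwartzMap E3 ℂ) (EuclideanSpace.single k (1 : ℝ) : E3)

lemma Dk_apply (k : Fin 3) (f : SchwartzMap E3 ℂ) (p : E3) :
    Dk k f p = fderiv ℝ ⇑f p (EuclideanSpace.single k 1) := by
  rfl

def PS (g : SchwartzMap E3 ℂ) : SchwartzMap E3 ℂ →L[ℝ] SchwartzMap E3 ℂ :=
  SchwartzMap.bilinLeftCLM (ContinuousLinearMap.mul ℝ ℂ) (schwartz_tg g)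

lemma PS_apply (g f : SchwartzMap E3 ℂ) (p : E3) : PS g f p = f p * g p := rfl

lemma integral_fderiv_schwartz (f : SchwartzMap E3 ℂ) (v : E3) :
    ∫ p : E3, fderiv ℝ ⇑f p v = 0 := by
  have hint : Integrable (fderiv ℝ ⇑f) (volume : Measure E3) := by
    have h := (SchwartzMap.fderivCLM ℝ E3 ℂ f).integrable (μ := (volume : Measure E3))
    have : ⇑(SchwartzMap.fderivCLM ℝ E3 ℂ f) = fderiv ℝ ⇑f := funext fun x => by
      simp [SchwartzMap.fderivCLM_apply]
    rwa [this] at h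
  have h := Real.fourier_fderiv f.integrable f.differentiable hint
  have h0 := congrFun h 0
  have hL : FourierTransform.fourier (fderiv ℝ ⇑f) 0 = ∫ p : E3, fderiv ℝ ⇑f p := by
    rw [Real.fourier_eq]
    simp
  have hR : VectorFourier.fourierSMulRight (-innerSL ℝ) (FourierTransform.fourier ⇑f) 0 = 0 := by
    ext w
    simp [VectorFourier.fourierSMulRight]
  rw [hL, hR] at h0
  rw [← ContinuousLinearMap.integral_apply hint v, h0, ContinuousLinearMap.zero_apply]

lemma ibp (f : SchwartzMap E3 ℂ) (k : Fin 3) :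
    ∫ p : E3, ((p k : ℝ) : ℂ) * fderiv ℝ ⇑f p (EuclideanSpace.single k 1)
      = - ∫ p : E3, f p := by
  have h0 := integral_fderiv_schwartz (Mk k f) (EuclideanSpace.single k 1)
  have hg : ∀ p : E3, fderiv ℝ ⇑(Mk k f) p (EuclideanSpace.single k 1)
      = f p + ((p k : ℝ) : ℂ) * fderiv ℝ ⇑f p (EuclideanSpace.single k 1) := by
    intro p
    have hcoe : ⇑(Mk k f) = fun q : E3 => (EuclideanSpace.proj (𝕜 := ℝ) k q) • f q := rfl
    rw [hcoe, fderiv_fun_smul ((EuclideanSpace.proj (𝕜 := ℝ) k).differentiableAt) f.differentiableAt,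
      (EuclideanSpace.proj (𝕜 := ℝ) k).fderiv]
    simp [EuclideanSpace.single_apply, Complex.real_smul]
    ring
  rw [show (fun p : E3 => fderiv ℝ ⇑(Mk k f) p (EuclideanSpace.single k 1))
      = fun p : E3 => f p + ((p k : ℝ) : ℂ) * fderiv ℝ ⇑f p (EuclideanSpace.single k 1)
      from funext hg] at h0
  have hint2 : Integrable (fun p : E3 => ((p k : ℝ) : ℂ)
      * fderiv ℝ ⇑f p (EuclideanSpace.single k 1)) volume := by
    have h := (Mk k (Dk k f)).integrable (μ := (volume : Measure E3))
    have : ⇑(Mk k (Dk k f)) = fun p : E3 => ((p k : ℝ) : ℂ)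
        * fderiv ℝ ⇑f p (EuclideanSpace.single k 1) := funext fun p => by
      rw [Mk_apply, Dk_apply]
    rwa [this] at h
  rw [integral_add f.integrable hint2] at h0
  linear_combination h0


/-- the temporal Coleman–Mandula operator `X₀` is symmetric on Schwartz
functions w.r.t. the Lorentz-invariant inner product. -/
theorem stmt11 (m : ℝ) (hm : 0 < m)
    (ψ φ : SchwartzMap (EuclideanSpace ℝ (Fin 3)) ℂ) :
    lorInner m (⇑ψ) (X0act m ⇑φ) = lorInner m (X0act m ⇑ψ) (⇑φ) := by
  have hω : ∀ p : E3, ((ω m p : ℝ) : ℂ) ≠ 0 := fun p => by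
    have h1 : (0:ℝ) < ω m p := Real.sqrt_pos.2 (by positivity)
    exact_mod_cast h1.ne'
  have hm' : (m : ℂ) ≠ 0 := by exact_mod_cast hm.ne'
  set ψc := conjS ψ with hψc
  set c : ℂ := -(I / ((m:ℂ) ^ 2)) / 2 with hc
  set G := PS φ ψc with hG
  set A : Fin 3 → SchwartzMap E3 ℂ := fun k => PS ψc (Mk k (Dk k φ)) with hA
  set B : Fin 3 → SchwartzMap E3 ℂ := fun k => PS φ (Mk k (Dk k ψc)) with hB
  have hpdc : ∀ (k : Fin 3) (p : E3), fderiv ℝ (⇑ψc) p (EuclideanSpace.single k 1)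
      = (starRingEnd ℂ) (fderiv ℝ (⇑ψ) p (EuclideanSpace.single k 1)) := by
    intro k p
    have h1 : ⇑ψc = fun q => star (ψ q) := rfl
    rw [h1, fderiv_star]
    rfl
  -- left side
  have hLfun : (fun p : E3 => (starRingEnd ℂ) (ψ p) * X0act m (⇑φ) p / (((2 * ω m p : ℝ)) : ℂ))
      = fun p : E3 => c • (((3:ℂ)/2) * G p + ∑ k, A k p) := by
    funext p
    simp only [X0act, PS_apply, Mk_apply, Dk_apply, conjS_apply, pd, smul_eq_mul,
      Complex.ofReal_mul, hψc, hG, hA]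
    rw [← Finset.sum_mul, Complex.ofReal_ofNat,
      div_eq_iff (mul_ne_zero two_ne_zero (hω p))]
    ring
  have hL : lorInner m ⇑ψ (X0act m ⇑φ)
      = c * (((3:ℂ)/2) * (∫ p : E3, G p) + ∑ k, ∫ p : E3, A k p) := by
    simp only [lorInner]
    rw [hLfun, integral_smul,
      integral_add ((G.integrable).const_mul ((3:ℂ)/2))
        (integrable_finset_sum _ (fun k _ => (A k).integrable)),
      integral_finset_sum _ (fun k _ => (A k).integrable)]
    rw [show (fun p : E3 => ((3:ℂ)/2) * G p) = fun p : E3 => ((3:ℂ)/2) • G p from rfl,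
      integral_smul]
    simp [smul_eq_mul]
  have hRfun : (fun p : E3 => (starRingEnd ℂ) (X0act m (⇑ψ) p) * φ p / (((2 * ω m p : ℝ)) : ℂ))
      = fun p : E3 => (-c) • (((3:ℂ)/2) * G p + ∑ k, B k p) := by
    funext p
    simp only [X0act, map_mul, map_neg, map_div₀, map_add, map_sum, map_pow, map_ofNat,
      Complex.conj_I, Complex.conj_ofReal, PS_apply, Mk_apply, Dk_apply, conjS_apply, pd,
      hpdc, smul_eq_mul, Complex.ofReal_mul, hψc, hG, hB]
    simp only [← hψc, hpdc]
    rw [← Finset.sum_mul, Complex.ofReal_ofNat,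
      div_eq_iff (mul_ne_zero two_ne_zero (hω p))]
    ring
  have hR : lorInner m (X0act m ⇑ψ) ⇑φ
      = (-c) * (((3:ℂ)/2) * (∫ p : E3, G p) + ∑ k, ∫ p : E3, B k p) := by
    simp only [lorInner]
    rw [hRfun, integral_smul,
      integral_add ((G.integrable).const_mul ((3:ℂ)/2))
        (integrable_finset_sum _ (fun k _ => (B k).integrable)),
      integral_finset_sum _ (fun k _ => (B k).integrable)]
    rw [show (fun p : E3 => ((3:ℂ)/2) * G p) = fun p : E3 => ((3:ℂ)/2) • G p from rfl,
      integral_smul]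
    simp [smul_eq_mul]
  have key : ∀ k : Fin 3, (∫ p : E3, A k p) + (∫ p : E3, B k p) = - ∫ p : E3, G p := by
    intro k
    have hpt : ∀ p : E3, A k p + B k p
        = ((p k : ℝ) : ℂ) * fderiv ℝ (⇑G) p (EuclideanSpace.single k 1) := by
      intro p
      have hGc : ⇑G = fun q : E3 => ψc q * φ q := rfl
      rw [hGc, fderiv_fun_mul ψc.differentiableAt φ.differentiableAt]
      simp only [ContinuousLinearMap.add_apply, ContinuousLinearMap.coe_smul',
        Pi.smul_apply, smul_eq_mul, PS_apply, Mk_apply, Dk_apply, hA, hB]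
      ring
    rw [← integral_add (A k).integrable (B k).integrable,
      show (fun p : E3 => A k p + B k p)
        = fun p : E3 => ((p k : ℝ) : ℂ) * fderiv ℝ (⇑G) p (EuclideanSpace.single k 1)
        from funext hpt,
      ibp G k]
  rw [hL, hR]
  have hs : ∑ k : Fin 3, ∫ p : E3, B k p
      = -((3:ℂ) * ∫ p : E3, G p) - ∑ k : Fin 3, ∫ p : E3, A k p := by
    have h1 : ∀ k : Fin 3, (∫ p : E3, B k p)
        = (- ∫ p : E3, G p) - ∫ p : E3, A k p := fun k => by
      linear_combination key k
    rw [Finset.sum_congr rfl (fun k _ => h1 k), Finset.sum_sub_distrib,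
      Finset.sum_const, Finset.card_fin]
    push_cast
    ring
  rw [hs]
  ring
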